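/- With G, ξ, S, and mod* as above: for every y = (y₁,…,y_M) ∈ S, setting ℓ̃ = y₁ - ⌊y₁/L⌋·L, one has 0 ≤ ℓ̃ < L and ∑_{m=1}^M [(C_m λ_m ℓ̃ - C_m φ_m) mod* (C_m L)]² = ‖yG - ξ‖². -/

import Mathlib

open Matrix

/-- The symmetric modulus operation: the unique representative of `x` modulo `T`
lying in `[-T/2, T/2)`. -/
noncomputable def smod (x T : ℝ) : ℝ := x - T * ⌊x / T + 1 / 2⌋

theorem stmt_15 (M L : ℕ) (hL : 0 < L) (C lam φ : Fin (M + 1) → ℝ)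
    (hC : ∀ m, 0 < C m) (hlam0 : lam 0 = 1)
    (hlam : ∀ m, 0 ≤ lam m ∧ lam m < (L : ℝ))
    (G : Matrix (Fin (M + 1)) (Fin (M + 1)) ℝ)
    (hG : G = fun p q => if p = 0 then C q * lam q else if p = q then C q * (L : ℝ) else 0)
    (ξ : Fin (M + 1) → ℝ) (hξ : ξ = fun m => C m * φ m)
    (S : Set (Fin (M + 1) → ℝ))
    (hS : S = {y | (∃ z : ℤ, y 0 = (z : ℝ)) ∧
      -(L : ℝ) / 2 + φ 0 ≤ y 0 ∧ y 0 < (L : ℝ) / 2 + φ 0 ∧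
      ∀ m : Fin (M + 1), m ≠ 0 →
        y m = (⌈φ m / (L : ℝ) - (y 0 / (L : ℝ) - (⌊y 0 / (L : ℝ)⌋ : ℝ)) * lam m - 1 / 2⌉ : ℝ)
          - (⌊y 0 / (L : ℝ)⌋ : ℝ) * lam m}) :
    ∀ y ∈ S, ∀ ℓt : ℝ, ℓt = y 0 - (⌊y 0 / (L : ℝ)⌋ : ℝ) * (L : ℝ) →
      (0 ≤ ℓt ∧ ℓt < (L : ℝ)) ∧
      ∑ m, (smod (C m * lam m * ℓt - C m * φ m) (C m * (L : ℝ))) ^ 2 =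
        ∑ m, (Matrix.vecMul y G m - ξ m) ^ 2 := by
  subst hG hξ hS
  rintro y ⟨⟨z, hz⟩, h1, h2, h3⟩ ℓt hℓt
  have hL' : (0:ℝ) < L := by exact_mod_cast hL
  have hLne : (L:ℝ) ≠ 0 := ne_of_gt hL'
  set k : ℤ := ⌊y 0 / (L:ℝ)⌋ with hk
  have hfr : ℓt = (L:ℝ) * Int.fract (y 0 / (L:ℝ)) := by
    rw [hℓt, Int.fract, ← hk]; field_simp
  constructor
  · constructor
    · rw [hfr]
      exact mul_nonneg hL'.le (Int.fract_nonneg _)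
    · rw [hfr]
      have := Int.fract_lt_one (y 0 / (L:ℝ))
      nlinarith
  · apply Finset.sum_congr rfl
    intro m _
    have hCm := hC m
    have hCmne : C m ≠ 0 := ne_of_gt hCm
    -- compute vecMul
    have hvm : Matrix.vecMul y
        (fun p q => if p = 0 then C q * lam q else if p = q then C q * (L : ℝ) else 0) m
        = if m = 0 then y 0 * (C 0 * lam 0)
          else y 0 * (C m * lam m) + y m * (C m * (L:ℝ)) := by
      simp only [Matrix.vecMul, dotProduct]
      by_cases hm : m = 0
      · subst hm
        rw [if_pos rfl]
        rw [show (∑ p : Fin (M+1), y p * (if p = 0 then C 0 * lam 0 else if p = (0 : Fin (M+1)) then C 0 * (L:ℝ) else 0))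
            = ∑ p : Fin (M+1), (if p = 0 then y 0 * (C 0 * lam 0) else 0) from by
          apply Finset.sum_congr rfl; intro p _; split_ifs with h <;> simp [h]]
        simp
      · rw [if_neg hm]
        rw [show (∑ p : Fin (M+1), y p * (if p = 0 then C m * lam m else if p = m then C m * (L:ℝ) else 0))
            = ∑ p : Fin (M+1), ((if p = 0 then y 0 * (C m * lam m) else 0)
              + (if p = m then y m * (C m * (L:ℝ)) else 0)) from by
          apply Finset.sum_congr rfl; intro p _
          by_cases h0 : p = 0
          · subst h0; simp [Ne.symm hm]
          · by_cases h1 : p = m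
            · subst h1; simp [h0]
            · simp [h0, h1]]
        rw [Finset.sum_add_distrib]
        simp
    rw [hvm]
    by_cases hm : m = 0
    · subst hm
      rw [if_pos rfl]
      have hfl : ⌊(C 0 * lam 0 * ℓt - C 0 * φ 0) / (C 0 * (L:ℝ)) + 1/2⌋ = -k := by
        have harg : (C 0 * lam 0 * ℓt - C 0 * φ 0) / (C 0 * (L:ℝ)) + 1/2
            = ((y 0 - φ 0) / (L:ℝ) + 1/2) + (-k : ℤ) := by
          rw [hℓt, hlam0]; push_cast; field_simp; ring
        rw [harg, Int.floor_add_intCast]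
        have h0 : ⌊(y 0 - φ 0) / (L:ℝ) + 1/2⌋ = 0 := by
          have ha : (0:ℝ) ≤ (y 0 - φ 0)/(L:ℝ) + 1/2 := by
            have hnum : 0 ≤ (y 0 - φ 0 + (L:ℝ)/2) / (L:ℝ) := div_nonneg (by linarith) hL'.le
            have heq : (y 0 - φ 0 + (L:ℝ)/2) / (L:ℝ) = (y 0 - φ 0)/(L:ℝ) + 1/2 := by
              field_simp
            linarith [heq ▸ hnum]
          have hb : (y 0 - φ 0)/(L:ℝ) + 1/2 < 1 := by
            have h : (y 0 - φ 0)/(L:ℝ) < 1/2 := by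
              rw [div_lt_iff₀ hL']; nlinarith
            linarith
          exact Int.floor_eq_zero_iff.2 (Set.mem_Ico.2 ⟨ha, hb⟩)
        rw [h0]; ring
      unfold smod
      rw [hfl, hlam0, hℓt]
      push_cast
      ring
    · rw [if_neg hm]
      have hym := h3 m hm
      have hfl : ⌊(C m * lam m * ℓt - C m * φ m) / (C m * (L:ℝ)) + 1/2⌋
          = -⌈φ m / (L:ℝ) - (y 0 / (L:ℝ) - (k:ℝ)) * lam m - 1/2⌉ := by
        rw [← Int.floor_neg]
        congr 1
        rw [hℓt]
        field_simp
        ring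
      unfold smod
      rw [hfl, hym, hℓt]
      push_cast
      ring
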